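/- Assume that the numbers λ_j(w), for w ∈ ℕ₀ and 0 ≤ j ≤ ℓ, are pairwise distinct (i.e. λ_j(w) = λ_{j'}(w') implies (j,w) = (j',w')). Fix w ∈ ℕ₀, 0 ≤ j ≤ ℓ and put λ = λ_j(w). Then the complex vector space of ℂ^{ℓ+1}-valued polynomial functions F satisfying u(1−u)F''(u) + (C − uU)F'(u) − (V + λ)F(u) = 0 for all u is one-dimensional, and every nonzero element of this space is a polynomial of degree exactly w. -/

import Mathlib

open Polynomial Matrix

noncomputable section

/-- The matrix `C`. -/
def Cmat (β : ℝ) (ℓ : ℕ) : Matrix (Fin (ℓ+1)) (Fin (ℓ+1)) ℂ :=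
  Matrix.of fun i j =>
    (if (i : ℕ) = (j : ℕ) then (β : ℂ) + 1 + 2 * (i : ℕ) else 0)
      + (if (i : ℕ) = (j : ℕ) + 1 then ((i : ℕ) : ℂ) else 0)

/-- The matrix `U`. -/
def Umat (α β : ℝ) (ℓ : ℕ) : Matrix (Fin (ℓ+1)) (Fin (ℓ+1)) ℂ :=
  Matrix.of fun i j =>
    if (i : ℕ) = (j : ℕ) then (α : ℂ) + β + ℓ + (i : ℕ) + 2 else 0

/-- The matrix `V`. -/
def Vmat (α β k : ℝ) (ℓ : ℕ) : Matrix (Fin (ℓ+1)) (Fin (ℓ+1)) ℂ :=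
  Matrix.of fun i j =>
    (if (i : ℕ) = (j : ℕ) then ((i : ℕ) : ℂ) * ((α : ℂ) + β + (i : ℕ) - k + 1) else 0)
      - (if (j : ℕ) = (i : ℕ) + 1 then ((ℓ : ℂ) - (i : ℕ)) * ((i : ℕ) + (β : ℂ) - k + 1) else 0)

/-- The eigenvalue `λ_j(w) = −w(w+α+β+ℓ+j+1) − j(α+β−k+1+j)`. -/
def lamEig (α β k : ℝ) (ℓ : ℕ) (w j : ℕ) : ℝ :=
  -((w : ℝ) * ((w : ℝ) + α + β + ℓ + j + 1)) - (j : ℝ) * (α + β - k + 1 + (j : ℝ))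

/-- Componentwise derivative of a vector of polynomials. -/
def vderiv (d : ℕ) : (Fin d → Polynomial ℂ) →ₗ[ℂ] (Fin d → Polynomial ℂ) :=
  LinearMap.pi fun i => (Polynomial.derivative (R := ℂ)).comp (LinearMap.proj i)

/-- The hypergeometric operator `D` acting on `ℂ^{ℓ+1}`-valued polynomials:
`(DF)(u) = u(1−u)F''(u) + (C−uU)F'(u) − V F(u)`. -/
def DlinV (α β k : ℝ) (ℓ : ℕ) :
    (Fin (ℓ+1) → Polynomial ℂ) →ₗ[ℂ] (Fin (ℓ+1) → Polynomial ℂ) :=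
  (((Matrix.scalar (Fin (ℓ+1)) (Polynomial.X * (1 - Polynomial.X))).mulVecLin).restrictScalars ℂ)
      ∘ₗ vderiv (ℓ+1) ∘ₗ vderiv (ℓ+1)
    + ((((Cmat β ℓ).map Polynomial.C
          - Matrix.scalar (Fin (ℓ+1)) Polynomial.X
              * (Umat α β ℓ).map Polynomial.C).mulVecLin).restrictScalars ℂ)
        ∘ₗ vderiv (ℓ+1)
    - (((Vmat α β k ℓ).map Polynomial.C).mulVecLin).restrictScalars ℂ

namespace HGaux

/-- second-derivative coefficient lemma -/
lemma coeff_term1 (q : Polynomial ℂ) (n : ℕ) :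
    (Polynomial.X * (1 - Polynomial.X) * (derivative (derivative q))).coeff n
      = ((n:ℂ)+1)*(n:ℂ) * q.coeff (n+1) - (n:ℂ)*((n:ℂ)-1) * q.coeff n := by
  have hr : ∀ m : ℕ, (derivative (derivative q)).coeff m
      = q.coeff (m+2) * (((m:ℂ)+2) * ((m:ℂ)+1)) := by
    intro m
    rw [coeff_derivative, coeff_derivative]
    push_cast
    ring
  have hE : Polynomial.X * (1 - Polynomial.X) * (derivative (derivative q))
      = Polynomial.X * (derivative (derivative q))
        - Polynomial.X * (Polynomial.X * (derivative (derivative q))) := by ring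
  rw [hE, coeff_sub]
  cases n with
  | zero =>
      simp [mul_coeff_zero]
  | succ m =>
      rw [coeff_X_mul, coeff_X_mul, hr]
      cases m with
      | zero =>
          simp [mul_coeff_zero]
          push_cast; ring
      | succ m' =>
          rw [coeff_X_mul, hr]
          push_cast; ring

end HGaux

namespace HGaux2
open HGaux

def Amat (β : ℝ) (ℓ : ℕ) (n : ℕ) : Matrix (Fin (ℓ+1)) (Fin (ℓ+1)) ℂ :=
  (n : ℂ) • 1 + Cmat β ℓ

def Bmat (α β k : ℝ) (ℓ : ℕ) (lam : ℂ) (n : ℕ) : Matrix (Fin (ℓ+1)) (Fin (ℓ+1)) ℂ :=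
  ((n:ℂ) * ((n:ℂ) - 1) + lam) • 1 + (n:ℂ) • Umat α β ℓ + Vmat α β k ℓ

lemma coeff_term2 (a b : ℂ) (p : Polynomial ℂ) (n : ℕ) :
    ((Polynomial.C a - Polynomial.X * Polynomial.C b) * derivative p).coeff n
      = a * (((n:ℂ)+1) * p.coeff (n+1)) - b * ((n:ℂ) * p.coeff n) := by
  rw [sub_mul, coeff_sub, coeff_C_mul, coeff_derivative, mul_assoc]
  congr 1
  · push_cast; ring
  · cases n with
    | zero => simp [mul_coeff_zero]
    | succ m =>
        rw [coeff_X_mul, coeff_C_mul, coeff_derivative]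
        push_cast; ring

lemma Amat_mulVec (β : ℝ) (ℓ n : ℕ) (x : Fin (ℓ+1) → ℂ) :
    Amat β ℓ n *ᵥ x = (n:ℂ) • x + Cmat β ℓ *ᵥ x := by
  simp [Amat, Matrix.add_mulVec, Matrix.smul_mulVec, Matrix.one_mulVec]

lemma Bmat_mulVec (α β k : ℝ) (ℓ : ℕ) (lam : ℂ) (n : ℕ) (x : Fin (ℓ+1) → ℂ) :
    Bmat α β k ℓ lam n *ᵥ x
      = ((n:ℂ)*((n:ℂ)-1)+lam) • x + (n:ℂ) • (Umat α β ℓ *ᵥ x) + Vmat α β k ℓ *ᵥ x := by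
  simp [Bmat, Matrix.add_mulVec, Matrix.smul_mulVec, Matrix.one_mulVec]

lemma coeff_DlinV (α β k : ℝ) (ℓ : ℕ) (P : Fin (ℓ+1) → Polynomial ℂ) (n : ℕ) (i : Fin (ℓ+1)) :
    ((DlinV α β k ℓ P) i).coeff n
      = ((n:ℂ)+1) * ((Amat β ℓ n *ᵥ fun j' => (P j').coeff (n+1)) i)
        - ((Bmat α β k ℓ 0 n *ᵥ fun j' => (P j').coeff n) i) := by
  have happ : (DlinV α β k ℓ P) i
      = Polynomial.X * (1 - Polynomial.X) * (derivative (derivative (P i)))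
        + (∑ j', (Polynomial.C ((Cmat β ℓ) i j') - Polynomial.X * Polynomial.C ((Umat α β ℓ) i j'))
            * derivative (P j'))
        - ∑ j', Polynomial.C ((Vmat α β k ℓ) i j') * (P j') := by
    have e1 : ((Matrix.scalar (Fin (ℓ+1)) (Polynomial.X * (1 - Polynomial.X))).mulVecLin)
        (vderiv (ℓ+1) (vderiv (ℓ+1) P)) i
        = Polynomial.X * (1 - Polynomial.X) * (derivative (derivative (P i))) := by
      rw [Matrix.mulVecLin_apply, Matrix.scalar_apply, Matrix.mulVec_diagonal]
      rfl
    have e2 : (((Cmat β ℓ).map Polynomial.C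
          - Matrix.scalar (Fin (ℓ+1)) Polynomial.X
              * (Umat α β ℓ).map Polynomial.C).mulVecLin) (vderiv (ℓ+1) P) i
        = ∑ j', (Polynomial.C ((Cmat β ℓ) i j') - Polynomial.X * Polynomial.C ((Umat α β ℓ) i j'))
            * derivative (P j') := by
      rw [Matrix.mulVecLin_apply, Matrix.mulVec, dotProduct]
      apply Finset.sum_congr rfl
      intro j' _
      simp [Matrix.sub_apply, Matrix.map_apply, Matrix.scalar_apply, Matrix.diagonal_mul, vderiv]
    have e3 : (((Vmat α β k ℓ).map Polynomial.C).mulVecLin) P i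
        = ∑ j', Polynomial.C ((Vmat α β k ℓ) i j') * (P j') := by
      rw [Matrix.mulVecLin_apply, Matrix.mulVec, dotProduct]
      apply Finset.sum_congr rfl
      intro j' _
      simp [Matrix.map_apply]
    simp only [DlinV, LinearMap.add_apply, LinearMap.sub_apply, LinearMap.comp_apply,
      LinearMap.restrictScalars_apply, Pi.add_apply, Pi.sub_apply]
    rw [e1, e2, e3]
  rw [happ, coeff_sub, coeff_add, coeff_term1, finset_sum_coeff, finset_sum_coeff]
  simp only [coeff_term2, coeff_C_mul]
  rw [Amat_mulVec, Bmat_mulVec]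
  simp only [Pi.add_apply, Pi.smul_apply, smul_eq_mul, Matrix.mulVec, dotProduct,
    Finset.sum_sub_distrib, Finset.mul_sum, mul_add]
  ring_nf

lemma Bmat_lam (α β k : ℝ) (ℓ : ℕ) (lam : ℂ) (n : ℕ) (x : Fin (ℓ+1) → ℂ) :
    Bmat α β k ℓ lam n *ᵥ x = Bmat α β k ℓ 0 n *ᵥ x + lam • x := by
  rw [Bmat_mulVec, Bmat_mulVec]
  funext i
  simp only [Pi.add_apply, Pi.smul_apply, smul_eq_mul]
  ring

lemma eigen_iff (α β k : ℝ) (ℓ : ℕ) (lam : ℂ) (P : Fin (ℓ+1) → Polynomial ℂ) :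
    DlinV α β k ℓ P = lam • P ↔
      ∀ n : ℕ, ((n:ℂ)+1) • (Amat β ℓ n *ᵥ fun i => (P i).coeff (n+1))
        = Bmat α β k ℓ lam n *ᵥ fun i => (P i).coeff n := by
  constructor
  · intro h n
    funext i
    have h2 := congrArg (fun Q : Fin (ℓ+1) → Polynomial ℂ => (Q i).coeff n) h
    simp only [Pi.smul_apply, coeff_smul, smul_eq_mul] at h2
    rw [coeff_DlinV] at h2
    rw [Bmat_lam]
    simp only [Pi.add_apply, Pi.smul_apply, smul_eq_mul]
    linear_combination h2
  · intro h
    funext i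
    ext n
    have h2 := congrArg (fun y : Fin (ℓ+1) → ℂ => y i) (h n)
    rw [Bmat_lam] at h2
    simp only [Pi.add_apply, Pi.smul_apply, smul_eq_mul] at h2
    rw [Pi.smul_apply, coeff_smul, smul_eq_mul, coeff_DlinV]
    linear_combination h2

lemma Bmat_apply_ne (α β k : ℝ) (ℓ : ℕ) (lam : ℂ) (n : ℕ) {i i' : Fin (ℓ+1)}
    (hne : i ≠ i') (hsup : (i':ℕ) ≠ (i:ℕ)+1) : Bmat α β k ℓ lam n i i' = 0 := by
  have hval : (i:ℕ) ≠ (i':ℕ) := fun h => hne (Fin.ext h)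
  simp [Bmat, Matrix.add_apply, Matrix.smul_apply, Matrix.one_apply, Umat, Vmat,
    hne, hval, hsup]

lemma Bmat_apply_diag (α β k : ℝ) (ℓ : ℕ) (lam : ℂ) (n : ℕ) (i : Fin (ℓ+1)) :
    Bmat α β k ℓ lam n i i
      = (n:ℂ)*((n:ℂ)-1) + lam + (n:ℂ)*((α:ℂ)+β+(ℓ:ℂ)+((i:ℕ):ℂ)+2)
        + ((i:ℕ):ℂ)*((α:ℂ)+β+((i:ℕ):ℂ)-k+1) := by
  simp [Bmat, Matrix.add_apply, Matrix.smul_apply, Matrix.one_apply, Umat, Vmat]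

lemma Bmat_diag_eq (α β k : ℝ) (ℓ : ℕ) (w jv : ℕ) (n : ℕ) (i : Fin (ℓ+1)) :
    Bmat α β k ℓ ((lamEig α β k ℓ w jv : ℝ) : ℂ) n i i
      = (((lamEig α β k ℓ w jv - lamEig α β k ℓ n i : ℝ)) : ℂ) := by
  rw [Bmat_apply_diag]
  simp only [lamEig]
  push_cast
  ring

lemma Amat_apply_gt (β : ℝ) (ℓ n : ℕ) {i i' : Fin (ℓ+1)} (h : (i:ℕ) < (i':ℕ)) :
    Amat β ℓ n i i' = 0 := by
  have h1 : i ≠ i' := fun he => absurd (congrArg Fin.val he) (by omega)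
  have h2 : (i:ℕ) ≠ (i':ℕ) := by omega
  have h3 : (i:ℕ) ≠ (i':ℕ)+1 := by omega
  simp [Amat, Matrix.add_apply, Matrix.smul_apply, Matrix.one_apply, Cmat, h1, h2, h3]

lemma Amat_diag (β : ℝ) (ℓ n : ℕ) (i : Fin (ℓ+1)) :
    Amat β ℓ n i i = (n:ℂ) + ((β:ℂ) + 1 + 2*((i:ℕ):ℂ)) := by
  have : (i:ℕ) ≠ (i:ℕ)+1 := by omega
  simp [Amat, Matrix.add_apply, Matrix.smul_apply, Matrix.one_apply, Cmat, this]

lemma Amat_det_isUnit (β : ℝ) (hβ : -1 < β) (ℓ n : ℕ) : IsUnit (Amat β ℓ n).det := by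
  have ht : (Amat β ℓ n).BlockTriangular OrderDual.toDual := by
    intro i i' h
    exact Amat_apply_gt β ℓ n h
  rw [Matrix.det_of_lowerTriangular _ ht, isUnit_iff_ne_zero]
  apply Finset.prod_ne_zero_iff.mpr
  intro i _
  rw [Amat_diag]
  have hpos : (0:ℝ) < (n:ℝ) + (β + 1 + 2*(i:ℕ)) := by
    have h1 : (0:ℝ) ≤ (n:ℝ) := Nat.cast_nonneg n
    have h2 : (0:ℝ) ≤ ((i:ℕ):ℝ) := Nat.cast_nonneg _
    nlinarith
  have : ((n:ℝ) + (β + 1 + 2*(i:ℕ)) : ℝ) ≠ 0 := ne_of_gt hpos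
  have hcast : (n:ℂ) + ((β:ℂ) + 1 + 2*((i:ℕ):ℂ)) = (((n:ℝ) + (β + 1 + 2*(i:ℕ)) : ℝ) : ℂ) := by
    push_cast; ring
  rw [hcast]
  exact_mod_cast Complex.ofReal_ne_zero.mpr this

lemma Bmat_det_isUnit (α β k : ℝ) (ℓ : ℕ) (lam : ℂ) (n : ℕ)
    (hd : ∀ i : Fin (ℓ+1), Bmat α β k ℓ lam n i i ≠ 0) :
    IsUnit (Bmat α β k ℓ lam n).det := by
  have ht : (Bmat α β k ℓ lam n).BlockTriangular id := by
    intro i i' h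
    exact Bmat_apply_ne α β k ℓ lam n (by intro he; subst he; exact lt_irrefl _ h)
      (by simp only [id] at h; omega)
  rw [Matrix.det_of_upperTriangular ht, isUnit_iff_ne_zero]
  exact Finset.prod_ne_zero_iff.mpr fun i _ => hd i

lemma mulVec_cancel {m : ℕ} {M : Matrix (Fin m) (Fin m) ℂ} (h : IsUnit M.det)
    {x y : Fin m → ℂ} (hxy : M *ᵥ x = M *ᵥ y) : x = y := by
  have h2 := congrArg (fun z => M⁻¹ *ᵥ z) hxy
  simpa [Matrix.mulVec_mulVec, Matrix.nonsing_inv_mul M h, Matrix.one_mulVec] using h2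

lemma mulVec_solve {m : ℕ} {M : Matrix (Fin m) (Fin m) ℂ} (h : IsUnit M.det)
    {x : Fin m → ℂ} {y : Fin m → ℂ} (hxy : M *ᵥ x = y) : x = M⁻¹ *ᵥ y := by
  subst hxy
  rw [Matrix.mulVec_mulVec, Matrix.nonsing_inv_mul _ h, Matrix.one_mulVec]

lemma mulVec_apply_bidiag {ℓ : ℕ} (M : Matrix (Fin (ℓ+1)) (Fin (ℓ+1)) ℂ)
    (hM : ∀ i i' : Fin (ℓ+1), i ≠ i' → (i':ℕ) ≠ (i:ℕ)+1 → M i i' = 0)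
    (x : Fin (ℓ+1) → ℂ) (i : Fin (ℓ+1)) :
    (M *ᵥ x) i = M i i * x i
      + (if h : (i:ℕ)+1 < ℓ+1 then M i ⟨(i:ℕ)+1, h⟩ * x ⟨(i:ℕ)+1, h⟩ else 0) := by
  rw [Matrix.mulVec, dotProduct]
  by_cases h : (i:ℕ)+1 < ℓ+1
  · rw [dif_pos h]
    set i1 : Fin (ℓ+1) := ⟨(i:ℕ)+1, h⟩ with hi1
    have hne : i ≠ i1 := by
      intro he
      have := congrArg Fin.val he
      simp [i1] at this
    rw [← Finset.sum_subset (Finset.subset_univ {i, i1})]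
    · rw [Finset.sum_pair hne]
    · intro b _ hb
      simp only [Finset.mem_insert, Finset.mem_singleton, not_or] at hb
      rw [hM i b (Ne.symm hb.1) (by
        intro he
        exact hb.2 (Fin.ext (by simp [i1, he]))), zero_mul]
  · rw [dif_neg h]
    have hiℓ : (i:ℕ) = ℓ := by omega
    rw [Finset.sum_eq_single i, add_zero]
    · intro b _ hb
      rw [hM i b (Ne.symm hb) (by have := b.isLt; omega), zero_mul]
    · intro hmem
      exact absurd (Finset.mem_univ i) hmem

def Gmap (α β k : ℝ) (ℓ : ℕ) (lam : ℂ) (n : ℕ) (y : Fin (ℓ+1) → ℂ) : Fin (ℓ+1) → ℂ :=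
  (Bmat α β k ℓ lam n)⁻¹ *ᵥ (((n:ℂ)+1) • (Amat β ℓ n *ᵥ y))

lemma Gmap_smul (α β k : ℝ) (ℓ : ℕ) (lam : ℂ) (n : ℕ) (t : ℂ) (y : Fin (ℓ+1) → ℂ) :
    Gmap α β k ℓ lam n (t • y) = t • Gmap α β k ℓ lam n y := by
  simp only [Gmap, Matrix.mulVec_smul]
  rw [smul_comm]

def bseq (α β k : ℝ) (ℓ : ℕ) (lam : ℂ) (w : ℕ) (v : Fin (ℓ+1) → ℂ) : ℕ → (Fin (ℓ+1) → ℂ)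
  | 0 => v
  | (m+1) => Gmap α β k ℓ lam (w - (m+1)) (bseq α β k ℓ lam w v m)

def c0seq (α β k : ℝ) (ℓ : ℕ) (lam : ℂ) (w : ℕ) (v : Fin (ℓ+1) → ℂ) (n : ℕ) :
    Fin (ℓ+1) → ℂ :=
  if n ≤ w then bseq α β k ℓ lam w v (w - n) else 0

lemma c0seq_w (α β k : ℝ) (ℓ : ℕ) (lam : ℂ) (w : ℕ) (v : Fin (ℓ+1) → ℂ) :
    c0seq α β k ℓ lam w v w = v := by
  simp [c0seq, bseq]

lemma c0seq_gt (α β k : ℝ) (ℓ : ℕ) (lam : ℂ) (w : ℕ) (v : Fin (ℓ+1) → ℂ) {n : ℕ}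
    (h : w < n) : c0seq α β k ℓ lam w v n = 0 := by
  simp [c0seq, (show ¬ n ≤ w by omega)]

lemma c0seq_lt (α β k : ℝ) (ℓ : ℕ) (lam : ℂ) (w : ℕ) (v : Fin (ℓ+1) → ℂ) {n : ℕ}
    (h : n < w) :
    c0seq α β k ℓ lam w v n = Gmap α β k ℓ lam n (c0seq α β k ℓ lam w v (n+1)) := by
  have h1 : c0seq α β k ℓ lam w v n = bseq α β k ℓ lam w v (w - n) := if_pos (le_of_lt h)
  have h2 : c0seq α β k ℓ lam w v (n+1) = bseq α β k ℓ lam w v (w - (n+1)) := if_pos h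
  have h3 : w - n = (w - (n+1)) + 1 := by omega
  rw [h1, h3, bseq]
  rw [show w - (w - (n+1) + 1) = n by omega, ← h2]

end HGaux2

open HGaux HGaux2

/-- If all the eigenvalues `λ_j(w)` are distinct, then for `λ = λ_j(w)` the space of
`ℂ^{ℓ+1}`-valued polynomial solutions of the hypergeometric equation
`u(1−u)F'' + (C−uU)F' − (V+λ)F = 0` is one-dimensional, and every nonzero solution has
degree exactly `w`. -/
theorem unique_polynomial_solution (α β k : ℝ) (ℓ : ℕ) (hα : -1 < α) (hβ : -1 < β)
    (hk0 : 0 < k) (hk1 : k < β + 1) (hℓ : 0 < ℓ)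
    (hdistinct : ∀ (w w' : ℕ) (j j' : Fin (ℓ+1)),
      lamEig α β k ℓ w j = lamEig α β k ℓ w' j' → w = w' ∧ j = j')
    (w : ℕ) (j : Fin (ℓ+1)) :
    ∃ P₀ : Fin (ℓ+1) → Polynomial ℂ, P₀ ≠ 0
      ∧ DlinV α β k ℓ P₀ = ((lamEig α β k ℓ w j : ℝ) : ℂ) • P₀
      ∧ (∀ P : Fin (ℓ+1) → Polynomial ℂ,
          DlinV α β k ℓ P = ((lamEig α β k ℓ w j : ℝ) : ℂ) • P → ∃ c : ℂ, P = c • P₀)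
      ∧ (∀ P : Fin (ℓ+1) → Polynomial ℂ,
          DlinV α β k ℓ P = ((lamEig α β k ℓ w j : ℝ) : ℂ) • P → P ≠ 0 →
            (∀ i, (P i).degree ≤ (w : WithBot ℕ)) ∧ ∃ i, (P i).degree = (w : WithBot ℕ)) := by
  set lam : ℂ := ((lamEig α β k ℓ w (j:ℕ) : ℝ) : ℂ) with hlam
  -- diagonal entries of B nonzero away from (w, j)
  have hBd : ∀ (n : ℕ) (i : Fin (ℓ+1)), (n ≠ w ∨ i ≠ j) → Bmat α β k ℓ lam n i i ≠ 0 := by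
    intro n i hni
    rw [hlam, Bmat_diag_eq, Complex.ofReal_ne_zero, sub_ne_zero]
    intro he
    obtain ⟨hw, hj⟩ := hdistinct w n j i he
    rcases hni with h | h
    · exact h hw.symm
    · exact h hj.symm
  have hBu : ∀ n : ℕ, n ≠ w → IsUnit (Bmat α β k ℓ lam n).det :=
    fun n hn => Bmat_det_isUnit α β k ℓ lam n (fun i => hBd n i (Or.inl hn))
  have hAu : ∀ n : ℕ, IsUnit (Amat β ℓ n).det := fun n => Amat_det_isUnit β hβ ℓ n
  have hBbidiag : ∀ i i' : Fin (ℓ+1), i ≠ i' → (i':ℕ) ≠ (i:ℕ)+1 →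
      Bmat α β k ℓ lam w i i' = 0 := fun i i' h1 h2 => Bmat_apply_ne α β k ℓ lam w h1 h2
  -- kernel rigidity
  have K : ∀ x : Fin (ℓ+1) → ℂ, Bmat α β k ℓ lam w *ᵥ x = 0 → x j = 0 → x = 0 := by
    intro x hx hxj
    have row : ∀ i : Fin (ℓ+1), Bmat α β k ℓ lam w i i * x i
        + (if h : (i:ℕ)+1 < ℓ+1 then Bmat α β k ℓ lam w i ⟨(i:ℕ)+1, h⟩ * x ⟨(i:ℕ)+1, h⟩ else 0)
          = 0 := by
      intro i
      rw [← mulVec_apply_bidiag _ hBbidiag, hx]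
      rfl
    have hlast : ∀ i : Fin (ℓ+1), ¬ ((i:ℕ)+1 < ℓ+1) → i ≠ j → x i = 0 := by
      intro i hi hij
      have hr := row i
      rw [dif_neg hi, add_zero] at hr
      exact (mul_eq_zero.mp hr).resolve_left (hBd w i (Or.inr hij))
    have habove : ∀ t : ℕ, ∀ i : Fin (ℓ+1), ℓ ≤ (i:ℕ) + t → j < i → x i = 0 := by
      intro t
      induction t with
      | zero =>
          intro i hi hji
          exact hlast i (by omega) (ne_of_gt hji)
      | succ t ih =>
          intro i hi hji
          by_cases h : (i:ℕ)+1 < ℓ+1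
          · have hx1 : x ⟨(i:ℕ)+1, h⟩ = 0 := by
              apply ih ⟨(i:ℕ)+1, h⟩ (by simp; omega)
              rw [Fin.lt_def] at hji ⊢
              simp
              omega
            have hr := row i
            rw [dif_pos h, hx1, mul_zero, add_zero] at hr
            exact (mul_eq_zero.mp hr).resolve_left (hBd w i (Or.inr (ne_of_gt hji)))
          · exact hlast i h (ne_of_gt hji)
    have habove' : ∀ i : Fin (ℓ+1), j < i → x i = 0 := fun i hi => habove ℓ i (by omega) hi
    have hdown : ∀ t : ℕ, ∀ i : Fin (ℓ+1), (j:ℕ) ≤ (i:ℕ) + t → x i = 0 := by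
      intro t
      induction t with
      | zero =>
          intro i hi
          rcases lt_or_eq_of_le (show j ≤ i by rw [Fin.le_def]; omega) with h | h
          · exact habove' i h
          · rw [← h]; exact hxj
      | succ t ih =>
          intro i hi
          rcases lt_trichotomy i j with hlt | heq | hgt
          · have h : (i:ℕ)+1 < ℓ+1 := by
              have hj2 := j.isLt
              rw [Fin.lt_def] at hlt
              omega
            have hx1 : x ⟨(i:ℕ)+1, h⟩ = 0 := ih ⟨(i:ℕ)+1, h⟩ (by simp; omega)
            have hr := row i
            rw [dif_pos h, hx1, mul_zero, add_zero] at hr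
            exact (mul_eq_zero.mp hr).resolve_left (hBd w i (Or.inr (ne_of_lt hlt)))
          · rw [heq]; exact hxj
          · exact habove' i hgt
    funext i
    exact hdown (j:ℕ) i (by omega)
  -- nonzero kernel vector
  have hdet0 : (Bmat α β k ℓ lam w).det = 0 := by
    have ht : (Bmat α β k ℓ lam w).BlockTriangular id := by
      intro i i' h
      exact Bmat_apply_ne α β k ℓ lam w (by intro he; subst he; exact lt_irrefl _ h)
        (by simp only [id] at h; omega)
    rw [Matrix.det_of_upperTriangular ht]
    apply Finset.prod_eq_zero (Finset.mem_univ j)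
    rw [hlam, Bmat_diag_eq]
    simp
  obtain ⟨v, hv0, hv⟩ := Matrix.exists_mulVec_eq_zero_iff.mpr hdet0
  have hvj : v j ≠ 0 := fun h => hv0 (K v hv h)
  obtain ⟨i0, hi0⟩ : ∃ i0, v i0 ≠ 0 := by
    by_contra hcon
    push_neg at hcon
    exact hv0 (funext hcon)
  -- the distinguished solution coefficients
  have hE0 : ∀ n : ℕ, ((n:ℂ)+1) • (Amat β ℓ n *ᵥ c0seq α β k ℓ lam w v (n+1))
      = Bmat α β k ℓ lam n *ᵥ c0seq α β k ℓ lam w v n := by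
    intro n
    rcases lt_trichotomy n w with h | h | h
    · rw [c0seq_lt α β k ℓ lam w v h]
      unfold Gmap
      rw [Matrix.mulVec_mulVec, Matrix.mul_nonsing_inv _ (hBu n (ne_of_lt h)),
        Matrix.one_mulVec]
    · rw [h, c0seq_gt α β k ℓ lam w v (by omega), c0seq_w]
      simp [Matrix.mulVec_zero, hv]
    · rw [c0seq_gt α β k ℓ lam w v h, c0seq_gt α β k ℓ lam w v (by omega)]
      simp [Matrix.mulVec_zero]
  set P₀ : Fin (ℓ+1) → Polynomial ℂ :=
    fun i => ∑ n ∈ Finset.range (w+1), Polynomial.C (c0seq α β k ℓ lam w v n i)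
      * Polynomial.X ^ n with hP₀
  have hcoeffP0 : ∀ (m : ℕ) (i : Fin (ℓ+1)), (P₀ i).coeff m = c0seq α β k ℓ lam w v m i := by
    intro m i
    rw [hP₀]
    simp only [finset_sum_coeff, coeff_C_mul, coeff_X_pow, mul_ite, mul_one, mul_zero]
    rw [Finset.sum_ite_eq (Finset.range (w+1)) m (fun n => c0seq α β k ℓ lam w v n i)]
    by_cases h : m ∈ Finset.range (w+1)
    · rw [if_pos h]
    · rw [if_neg h, c0seq_gt α β k ℓ lam w v (by simp [Finset.mem_range] at h; omega)]
      rfl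
  have hP0eig : DlinV α β k ℓ P₀ = lam • P₀ := by
    apply (eigen_iff α β k ℓ lam P₀).mpr
    intro n
    have e1 : (fun i => (P₀ i).coeff (n+1)) = c0seq α β k ℓ lam w v (n+1) :=
      funext fun i => hcoeffP0 _ i
    have e2 : (fun i => (P₀ i).coeff n) = c0seq α β k ℓ lam w v n :=
      funext fun i => hcoeffP0 _ i
    rw [e1, e2]
    exact hE0 n
  have hP0ne : P₀ ≠ 0 := by
    intro h0
    have h1 : (P₀ i0).coeff w = 0 := by rw [h0]; simp
    rw [hcoeffP0, c0seq_w] at h1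
    exact hi0 h1
  -- every solution is a multiple of P₀ at the level of coefficients
  have main : ∀ P : Fin (ℓ+1) → Polynomial ℂ, DlinV α β k ℓ P = lam • P →
      ∃ t : ℂ, ∀ n : ℕ, (fun i => (P i).coeff n) = t • c0seq α β k ℓ lam w v n := by
    intro P hP
    have hE : ∀ n : ℕ, ((n:ℂ)+1) • (Amat β ℓ n *ᵥ fun i => (P i).coeff (n+1))
        = Bmat α β k ℓ lam n *ᵥ fun i => (P i).coeff n := (eigen_iff α β k ℓ lam P).mp hP
    have hvanish : ∀ n : ℕ, w < n → (fun i => (P i).coeff n) = (0 : Fin (ℓ+1) → ℂ) := by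
      have hN : ∀ n : ℕ, (Finset.univ.sup fun i => (P i).natDegree) + 1 ≤ n →
          (fun i => (P i).coeff n) = (0 : Fin (ℓ+1) → ℂ) := by
        intro n hn
        funext i
        apply Polynomial.coeff_eq_zero_of_natDegree_lt
        have h3 : (P i).natDegree ≤ Finset.univ.sup fun i => (P i).natDegree := by
          simpa using Finset.le_sup (f := fun i => (P i).natDegree) (Finset.mem_univ i)
        omega
      have step : ∀ n : ℕ, n ≠ w → (fun i => (P i).coeff (n+1)) = (0 : Fin (ℓ+1) → ℂ) →
          (fun i => (P i).coeff n) = (0 : Fin (ℓ+1) → ℂ) := by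
        intro n hn h1
        have hEn := hE n
        rw [h1] at hEn
        rw [Matrix.mulVec_zero, smul_zero] at hEn
        exact mulVec_cancel (hBu n hn) (by rw [Matrix.mulVec_zero]; exact hEn.symm)
      have hind : ∀ t n : ℕ, w < n → (Finset.univ.sup fun i => (P i).natDegree) + 1 ≤ n + t →
          (fun i => (P i).coeff n) = (0 : Fin (ℓ+1) → ℂ) := by
        intro t
        induction t with
        | zero => intro n hn hN'; exact hN n (by omega)
        | succ t ih => intro n hn hN'; exact step n (by omega) (ih (n+1) (by omega) (by omega))
      intro n hn
      exact hind ((Finset.univ.sup fun i => (P i).natDegree) + 1) n hn (by omega)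
    have hker : Bmat α β k ℓ lam w *ᵥ (fun i => (P i).coeff w) = 0 := by
      have hEw := hE w
      rw [hvanish (w+1) (by omega), Matrix.mulVec_zero, smul_zero] at hEw
      exact hEw.symm
    set t : ℂ := (P j).coeff w / v j with htdef
    have hcw : (fun i => (P i).coeff w) = t • v := by
      have hmem : Bmat α β k ℓ lam w *ᵥ ((fun i => (P i).coeff w) - t • v) = 0 := by
        rw [Matrix.mulVec_sub, hker, Matrix.mulVec_smul, hv, smul_zero, sub_zero]
      have hj0 : ((fun i => (P i).coeff w) - t • v) j = 0 := by
        simp only [Pi.sub_apply, Pi.smul_apply, smul_eq_mul]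
        rw [div_mul_cancel₀ _ hvj]
        ring
      exact sub_eq_zero.mp (K _ hmem hj0)
    refine ⟨t, ?_⟩
    have hdown : ∀ m : ℕ, m ≤ w →
        (fun i => (P i).coeff (w - m)) = t • c0seq α β k ℓ lam w v (w - m) := by
      intro m
      induction m with
      | zero =>
          intro _
          simpa [c0seq_w] using hcw
      | succ m ih =>
          intro hm
          have hn : w - (m+1) < w := by omega
          have hsn : (w - (m+1)) + 1 = w - m := by omega
          have hcn1 : (fun i => (P i).coeff ((w - (m+1)) + 1))
              = t • c0seq α β k ℓ lam w v ((w - (m+1)) + 1) := by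
            rw [hsn]; exact ih (by omega)
          have hEn := hE (w - (m+1))
          have hc_n : (fun i => (P i).coeff (w - (m+1)))
              = Gmap α β k ℓ lam (w - (m+1)) (fun i => (P i).coeff ((w - (m+1)) + 1)) :=
            mulVec_solve (hBu _ (by omega)) hEn.symm
          rw [hc_n, hcn1, Gmap_smul, ← c0seq_lt α β k ℓ lam w v hn]
    intro n
    by_cases h : n ≤ w
    · have h2 := hdown (w - n) (by omega)
      rw [show w - (w - n) = n by omega] at h2
      exact h2
    · rw [hvanish n (by omega), c0seq_gt α β k ℓ lam w v (by omega), smul_zero]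
  -- assemble
  have hdegle : ∀ P : Fin (ℓ+1) → Polynomial ℂ, DlinV α β k ℓ P = lam • P →
      ∀ i, (P i).degree ≤ (w : WithBot ℕ) := by
    intro P hP i
    obtain ⟨t, htall⟩ := main P hP
    rw [Polynomial.degree_le_iff_coeff_zero]
    intro m hm
    have hm' : w < m := by exact_mod_cast hm
    have h2 := congrFun (htall m) i
    rw [c0seq_gt α β k ℓ lam w v hm'] at h2
    simpa using h2
  refine ⟨P₀, hP0ne, hP0eig, ?_, ?_⟩
  · intro P hP
    obtain ⟨t, htall⟩ := main P hP
    refine ⟨t, funext fun i => Polynomial.ext fun n => ?_⟩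
    have h2 := congrFun (htall n) i
    simp only [Pi.smul_apply, smul_eq_mul] at h2
    rw [h2, Pi.smul_apply, coeff_smul, hcoeffP0, smul_eq_mul]
  · intro P hP hPne
    obtain ⟨t, htall⟩ := main P hP
    have ht0 : t ≠ 0 := by
      intro h0
      apply hPne
      funext i
      ext n
      have h2 := congrFun (htall n) i
      rw [h0, zero_smul] at h2
      simpa using h2
    refine ⟨hdegle P hP, i0, ?_⟩
    have hcoeff : (P i0).coeff w = t * v i0 := by
      have h2 := congrFun (htall w) i0
      rw [c0seq_w] at h2
      simpa using h2
    have hne : (P i0).coeff w ≠ 0 := by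
      rw [hcoeff]; exact mul_ne_zero ht0 hi0
    exact le_antisymm (hdegle P hP i0) (Polynomial.le_degree_of_ne_zero hne)
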